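/- The asymmetric piecewise quadratic scoring function S_τ(x,y) = |1(x ≥ y) − τ| (x−y)² is strictly consistent for the τ-expectile relative to the class of probability measures on ℝ with finite second moment; i.e., the τ-expectile is the unique minimizer of x ↦ E_F[S_τ(x,Y)]. -/

import Mathlib

open MeasureTheory Set

lemma key_pointwise (τ x t y : ℝ) (h0 : 0 < τ) (h1 : τ < 1) :
    |(if y ≤ t then (1:ℝ) else 0) - τ| * (t - y) ^ 2
      + 2 * (x - t) * ((1 - τ) * max (t - y) 0 - τ * max (y - t) 0)
      + min τ (1 - τ) * (x - t) ^ 2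
    ≤ |(if y ≤ x then (1:ℝ) else 0) - τ| * (x - y) ^ 2 := by
  have ha : |(1:ℝ) - τ| = 1 - τ := abs_of_nonneg (by linarith)
  have hb : |(0:ℝ) - τ| = τ := by rw [zero_sub, abs_neg, abs_of_pos h0]
  have hm1 : min τ (1 - τ) ≤ τ := min_le_left _ _
  have hm2 : min τ (1 - τ) ≤ 1 - τ := min_le_right _ _
  rcases le_or_gt y t with hyt | hyt <;> rcases le_or_gt y x with hyx | hyx
  · rw [if_pos hyt, if_pos hyx, ha,
      max_eq_left (by linarith), max_eq_right (by linarith)]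
    nlinarith [sq_nonneg (x - t)]
  · rw [if_pos hyt, if_neg (not_le.mpr hyx), ha, hb,
      max_eq_left (by linarith), max_eq_right (by linarith)]
    nlinarith [mul_nonneg (sub_nonneg.mpr hm1) (sq_nonneg (y - x)),
      mul_nonneg (sub_nonneg.mpr hm2) (sq_nonneg (t - y)),
      mul_nonneg (mul_nonneg (sub_nonneg.mpr hm2) (by linarith : (0:ℝ) ≤ t - y))
        (by linarith : (0:ℝ) ≤ y - x)]
  · rw [if_neg (not_le.mpr hyt), if_pos hyx, ha, hb,
      max_eq_right (by linarith), max_eq_left (by linarith)]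
    nlinarith [mul_nonneg (sub_nonneg.mpr hm2) (sq_nonneg (x - y)),
      mul_nonneg (sub_nonneg.mpr hm1) (sq_nonneg (y - t)),
      mul_nonneg (mul_nonneg (sub_nonneg.mpr hm1) (by linarith : (0:ℝ) ≤ y - t))
        (by linarith : (0:ℝ) ≤ x - y)]
  · rw [if_neg (not_le.mpr hyt), if_neg (not_le.mpr hyx), hb,
      max_eq_right (by linarith), max_eq_left (by linarith)]
    nlinarith [sq_nonneg (x - t)]

lemma score_meas (τ x : ℝ) :
    Measurable (fun y : ℝ => |(if y ≤ x then (1:ℝ) else 0) - τ| * (x - y) ^ 2) := by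
  apply Measurable.mul
  · apply Measurable.abs
    apply Measurable.sub _ measurable_const
    exact Measurable.ite measurableSet_Iic measurable_const measurable_const
  · exact ((measurable_const.sub measurable_id).pow measurable_const)

lemma score_integrable (τ x : ℝ) (hτ : τ ∈ Ioo (0:ℝ) 1)
    (F : Measure ℝ) [IsProbabilityMeasure F] (h2 : MemLp (fun y => y) 2 F) :
    Integrable (fun y : ℝ => |(if y ≤ x then (1:ℝ) else 0) - τ| * (x - y) ^ 2) F := by
  have hsq : Integrable (fun y : ℝ => (x - y) ^ 2) F := by
    have := ((memLp_const (p := 2) (μ := F) x).sub h2).integrable_sq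
    simpa using this
  refine hsq.mono' (score_meas τ x).aestronglyMeasurable ?_
  filter_upwards with y
  rw [Real.norm_eq_abs, abs_mul, abs_abs, abs_of_nonneg (sq_nonneg (x - y))]
  have hc : |(if y ≤ x then (1:ℝ) else 0) - τ| ≤ 1 := by
    rcases hτ with ⟨h0, h1⟩
    split <;> rw [abs_le] <;> constructor <;> linarith
  nlinarith [sq_nonneg (x - y)]

/-- The asymmetric piecewise quadratic scoring function
`S_τ(x,y) = |1(x ≥ y) − τ|(x−y)²` is strictly consistent for the τ-expectile
relative to probability measures with finite second moment: the τ-expectile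
is the unique minimizer of the expected score. -/
theorem asymmetric_quadratic_strictly_consistent_for_expectile
    (τ : ℝ) (hτ : τ ∈ Ioo (0:ℝ) 1)
    (F : Measure ℝ) [IsProbabilityMeasure F]
    (h2 : MemLp (fun y => y) 2 F)
    (μτ : ℝ)
    (hμ : τ * ∫ y, max (y - μτ) 0 ∂F = (1 - τ) * ∫ y, max (μτ - y) 0 ∂F) :
    ∀ x : ℝ,
      (∫ y, |(if y ≤ μτ then (1:ℝ) else 0) - τ| * (μτ - y) ^ 2 ∂F ≤
        ∫ y, |(if y ≤ x then (1:ℝ) else 0) - τ| * (x - y) ^ 2 ∂F) ∧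
      (x ≠ μτ →
        ∫ y, |(if y ≤ μτ then (1:ℝ) else 0) - τ| * (μτ - y) ^ 2 ∂F <
          ∫ y, |(if y ≤ x then (1:ℝ) else 0) - τ| * (x - y) ^ 2 ∂F) := by
  obtain ⟨h0, h1⟩ := hτ
  intro x
  set m : ℝ := min τ (1 - τ) with hm
  have hmpos : 0 < m := lt_min h0 (by linarith)
  -- integrability of pieces
  have hy1 : Integrable (fun y => y) F := h2.integrable (by norm_num)
  have hpos : Integrable (fun y => max (μτ - y) 0) F :=
    ((integrable_const μτ).sub hy1).pos_part
  have hneg : Integrable (fun y => max (y - μτ) 0) F :=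
    (hy1.sub (integrable_const μτ)).pos_part
  have hh : Integrable (fun y => (1 - τ) * max (μτ - y) 0 - τ * max (y - μτ) 0) F :=
    (hpos.const_mul _).sub (hneg.const_mul _)
  have hμ' : ∫ y, ((1 - τ) * max (μτ - y) 0 - τ * max (y - μτ) 0) ∂F = 0 := by
    rw [integral_sub (hpos.const_mul _) (hneg.const_mul _),
      integral_const_mul, integral_const_mul]
    linarith [hμ]
  have hfx := score_integrable τ x ⟨h0, h1⟩ F h2
  have hfμ := score_integrable τ μτ ⟨h0, h1⟩ F h2
  have hLHSint : Integrable (fun y =>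
      |(if y ≤ μτ then (1:ℝ) else 0) - τ| * (μτ - y) ^ 2
        + 2 * (x - μτ) * ((1 - τ) * max (μτ - y) 0 - τ * max (y - μτ) 0)
        + m * (x - μτ) ^ 2) F :=
    (hfμ.add (hh.const_mul _)).add (integrable_const _)
  have hle : ∫ y, (|(if y ≤ μτ then (1:ℝ) else 0) - τ| * (μτ - y) ^ 2
        + 2 * (x - μτ) * ((1 - τ) * max (μτ - y) 0 - τ * max (y - μτ) 0)
        + m * (x - μτ) ^ 2) ∂F
      ≤ ∫ y, |(if y ≤ x then (1:ℝ) else 0) - τ| * (x - y) ^ 2 ∂F := by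
    refine integral_mono hLHSint hfx ?_
    intro y
    exact key_pointwise τ x μτ y h0 h1
  have hcalc : ∫ y, (|(if y ≤ μτ then (1:ℝ) else 0) - τ| * (μτ - y) ^ 2
        + 2 * (x - μτ) * ((1 - τ) * max (μτ - y) 0 - τ * max (y - μτ) 0)
        + m * (x - μτ) ^ 2) ∂F
      = (∫ y, |(if y ≤ μτ then (1:ℝ) else 0) - τ| * (μτ - y) ^ 2 ∂F) + m * (x - μτ) ^ 2 := by
    have hA : Integrable (fun y => |(if y ≤ μτ then (1:ℝ) else 0) - τ| * (μτ - y) ^ 2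
        + 2 * (x - μτ) * ((1 - τ) * max (μτ - y) 0 - τ * max (y - μτ) 0)) F :=
      hfμ.add (hh.const_mul _)
    rw [integral_add hA (integrable_const _),
      integral_add hfμ (hh.const_mul _), integral_const_mul, hμ',
      integral_const]
    simp
  rw [hcalc] at hle
  constructor
  · nlinarith [sq_nonneg (x - μτ)]
  · intro hx
    have hne : x - μτ ≠ 0 := sub_ne_zero.mpr hx
    have : 0 < m * (x - μτ) ^ 2 := mul_pos hmpos (by positivity)
    linarith
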